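/- lim_{χ→0+} √χ · A(χ) = √π · Γ(1/4)/Γ(3/4), where A(χ) := ∫_χ^1 (1−ζ) ζ^{−3/4} (ζ−χ)^{−3/4} dζ. -/

import Mathlib

open Real MeasureTheory intervalIntegral Filter Set


lemma betaII {p q : ℝ} (hp : -1 < p) (hq : -1 < q) :
    IntervalIntegrable (fun x : ℝ => x ^ p * (1 - x) ^ q) volume 0 1 := by
  have h1 : IntervalIntegrable (fun x : ℝ => x ^ p * (1 - x) ^ q) volume 0 (1/2) := by
    apply (intervalIntegrable_rpow' hp).mul_continuousOn
    apply ContinuousOn.rpow_const (continuous_const.sub continuous_id).continuousOn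
    intro x hx
    rw [uIcc_of_le (by norm_num)] at hx
    left; intro h; have := sub_eq_zero.mp h; simp only [id] at this; linarith [hx.2]
  have h2 : IntervalIntegrable (fun x : ℝ => x ^ p * (1 - x) ^ q) volume (1/2) 1 := by
    have base : IntervalIntegrable (fun x : ℝ => ((1:ℝ) - x) ^ q) volume (1/2) 1 := by
      have := (intervalIntegrable_rpow' (a := 0) (b := 1/2) hq).comp_sub_left 1
      norm_num at this
      exact this.symm
    apply base.continuousOn_mul
    apply ContinuousOn.rpow_const continuousOn_id
    intro x hx
    rw [uIcc_of_le (by norm_num)] at hx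
    left; intro h; simp only [id] at h; rw [h] at hx; norm_num at hx
  exact h1.trans h2


lemma betaVal : ∫ x in (0:ℝ)..1, x ^ (-(1/2):ℝ) * (1-x) ^ (-(3/4):ℝ)
    = Real.sqrt Real.pi * Real.Gamma (1/4) / Real.Gamma (3/4) := by
  have key := Complex.Gamma_mul_Gamma_eq_betaIntegral (s := 1/2) (t := 1/4)
    (by norm_num [Complex.div_re]) (by norm_num [Complex.div_re])
  have hbeta : Complex.betaIntegral (1/2) (1/4)
      = ((∫ x in (0:ℝ)..1, x ^ (-(1/2):ℝ) * (1-x) ^ (-(3/4):ℝ) : ℝ) : ℂ) := by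
    rw [Complex.betaIntegral, ← intervalIntegral.integral_ofReal]
    apply intervalIntegral.integral_congr
    intro x hx
    rw [uIcc_of_le (by norm_num)] at hx
    have h0 : (0:ℝ) ≤ x := hx.1
    have h1 : (0:ℝ) ≤ 1 - x := by linarith [hx.2]
    push_cast
    rw [Complex.ofReal_cpow h0, Complex.ofReal_cpow h1]
    push_cast
    norm_num
  rw [hbeta, show (1/2 : ℂ) + 1/4 = ((3/4 : ℝ) : ℂ) by norm_num,
    show (1/2 : ℂ) = ((1/2 : ℝ) : ℂ) by norm_num,
    show (1/4 : ℂ) = ((1/4 : ℝ) : ℂ) by norm_num,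
    Complex.Gamma_ofReal, Complex.Gamma_ofReal, Complex.Gamma_ofReal,
    ← Complex.ofReal_mul, ← Complex.ofReal_mul] at key
  have := Complex.ofReal_inj.mp key
  have hpos : 0 < Real.Gamma (3/4) := Real.Gamma_pos_of_pos (by norm_num)
  rw [Real.Gamma_one_half_eq] at this
  field_simp
  linarith [this]

/-- `A(χ) := ∫_χ^1 (1−ζ) ζ^{−3/4} (ζ−χ)^{−3/4} dζ`. -/
noncomputable def Aint (χ : ℝ) : ℝ :=
  ∫ ζ in χ..1, (1 - ζ) * ζ ^ (-(3/4) : ℝ) * (ζ - χ) ^ (-(3/4) : ℝ)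


lemma subst {χ : ℝ} (h0 : 0 < χ) (h1 : χ < 1) :
    Real.sqrt χ * Aint χ
      = ∫ x in χ..1, (1 - χ/x) * (x ^ (-(1/2):ℝ) * (1-x) ^ (-(3/4):ℝ)) := by
  set g : ℝ → ℝ := fun ζ => (1 - ζ) * ζ ^ (-(3/4) : ℝ) * (ζ - χ) ^ (-(3/4) : ℝ) with hg
  have hχ0 : χ ≠ 0 := ne_of_gt h0
  have himg : (fun x : ℝ => χ / x) '' Ioo χ 1 = Ioo χ 1 := by
    ext y
    constructor
    · rintro ⟨x, hx, rfl⟩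
      have hx0 : 0 < x := h0.trans hx.1
      constructor
      · rw [lt_div_iff₀ hx0]; nlinarith [hx.2]
      · rw [div_lt_one hx0]; exact hx.1
    · intro hy
      have hy0 : 0 < y := h0.trans hy.1
      refine ⟨χ / y, ⟨?_, ?_⟩, ?_⟩
      · rw [lt_div_iff₀ hy0]; nlinarith [hy.2]
      · rw [div_lt_one hy0]; exact hy.1
      · field_simp
  have hder : ∀ x ∈ Ioo χ 1, HasDerivWithinAt (fun x : ℝ => χ / x)
      (-(χ / x ^ 2)) (Ioo χ 1) x := by
    intro x hx
    have hx0 : x ≠ 0 := ne_of_gt (h0.trans hx.1)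
    have : HasDerivAt (fun x : ℝ => χ / x) (-(χ / x ^ 2)) x := by
      simpa [div_eq_mul_inv, mul_comm, neg_div] using
        ((hasDerivAt_inv hx0).const_mul χ)
    exact this.hasDerivWithinAt
  have hinj : InjOn (fun x : ℝ => χ / x) (Ioo χ 1) := by
    intro a ha b hb hab
    have ha0 : a ≠ 0 := ne_of_gt (h0.trans ha.1)
    have hb0 : b ≠ 0 := ne_of_gt (h0.trans hb.1)
    field_simp at hab
    rcases hab with h | h
    · rfl
  have key := integral_image_eq_integral_abs_deriv_smul measurableSet_Ioo hder hinj g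
  rw [himg] at key
  have hAint : Aint χ = ∫ x in Ioo χ 1, g x := by
    rw [Aint, intervalIntegral.integral_of_le h1.le, MeasureTheory.integral_Ioc_eq_integral_Ioo]
  have hRHS : ∫ x in Ioo χ 1, |(-(χ / x ^ 2))| • g (χ / x)
      = χ ^ (-(1/2):ℝ) * ∫ x in χ..1, (1 - χ/x) * (x ^ (-(1/2):ℝ) * (1-x) ^ (-(3/4):ℝ)) := by
    rw [intervalIntegral.integral_of_le h1.le, MeasureTheory.integral_Ioc_eq_integral_Ioo,
      ← MeasureTheory.integral_const_mul]
    apply MeasureTheory.setIntegral_congr_fun measurableSet_Ioo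
    intro x hx
    have hx0 : 0 < x := h0.trans hx.1
    have hx1 : x < 1 := hx.2
    have h1x : 0 < 1 - x := by linarith
    have habs : |(-(χ / x ^ 2))| = χ / x ^ 2 := by
      rw [abs_neg, abs_of_nonneg (by positivity)]
    have hsub : χ / x - χ = χ * (1 - x) / x := by field_simp
    have e1 : (χ/x) ^ (-(3/4):ℝ) = χ ^ (-(3/4):ℝ) / x ^ (-(3/4):ℝ) :=
      Real.div_rpow h0.le hx0.le _
    have e2 : (χ * (1 - x) / x) ^ (-(3/4):ℝ)
        = χ ^ (-(3/4):ℝ) * (1-x) ^ (-(3/4):ℝ) / x ^ (-(3/4):ℝ) := by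
      rw [Real.div_rpow (by positivity) hx0.le, Real.mul_rpow h0.le h1x.le]
    have hχpow : χ * χ ^ (-(3/4):ℝ) * χ ^ (-(3/4):ℝ) = χ ^ (-(1/2):ℝ) := by
      nth_rewrite 1 [← Real.rpow_one χ]
      rw [← Real.rpow_add h0, ← Real.rpow_add h0]; norm_num
    have hxpow : x ^ (-(1/2):ℝ) * x ^ (-(3/4):ℝ) * x ^ (-(3/4):ℝ) = (x ^ 2)⁻¹ := by
      rw [← Real.rpow_add hx0, ← Real.rpow_add hx0]
      rw [show (-(1/2) + -(3/4) + -(3/4) : ℝ) = -(2:ℕ) by norm_num,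
        Real.rpow_neg hx0.le, Real.rpow_natCast]
    have hxne : x ^ (-(3/4):ℝ) ≠ 0 := ne_of_gt (Real.rpow_pos_of_pos hx0 _)
    have hxne2 : (x:ℝ) ^ 2 ≠ 0 := by positivity
    simp only [smul_eq_mul, hg]
    rw [habs]
    have hxb : x ^ (-(1/2):ℝ) = (x ^ 2)⁻¹ / (x ^ (-(3/4):ℝ) * x ^ (-(3/4):ℝ)) := by
      rw [← hxpow]; field_simp
    rw [hsub, e1, e2, ← hχpow, hxb]
    field_simp
  rw [hAint, key, hRHS, ← mul_assoc, Real.sqrt_eq_rpow, ← Real.rpow_add h0]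
  norm_num

noncomputable def hf : ℝ → ℝ := fun x => x ^ (-(1/2):ℝ) * (1-x) ^ (-(3/4):ℝ)
noncomputable def cf : ℝ → ℝ := fun x => x ^ (-(3/4):ℝ) * (1-x) ^ (-(3/4):ℝ)

lemma hf_int : IntervalIntegrable hf volume 0 1 := betaII (by norm_num) (by norm_num)
lemma betaVal2 : ∫ x in (0:ℝ)..1, hf x
    = Real.sqrt Real.pi * Real.Gamma (1/4) / Real.Gamma (3/4) := betaVal

lemma cf_int : IntervalIntegrable cf volume 0 1 := betaII (by norm_num) (by norm_num)

lemma sub_uIcc {χ : ℝ} (h0 : 0 ≤ χ) (h1 : χ ≤ 1) : uIcc χ (1:ℝ) ⊆ uIcc (0:ℝ) 1 := by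
  rw [uIcc_of_le h1, uIcc_of_le (by norm_num)]
  exact Icc_subset_Icc h0 le_rfl

lemma sub_uIcc' {χ : ℝ} (h0 : 0 ≤ χ) (h1 : χ ≤ 1) : uIcc (0:ℝ) χ ⊆ uIcc (0:ℝ) 1 := by
  rw [uIcc_of_le h0, uIcc_of_le (by norm_num)]
  exact Icc_subset_Icc le_rfl h1

/-- decomposition -/
lemma decomp {χ : ℝ} (h0 : 0 < χ) (h1 : χ < 1) :
    Real.sqrt χ * Aint χ
      = (∫ x in (0:ℝ)..1, hf x) - (∫ x in (0:ℝ)..χ, hf x)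
        - ∫ x in χ..1, (χ/x) * hf x := by
  have hh : IntervalIntegrable hf volume χ 1 := hf_int.mono_set (sub_uIcc h0.le h1.le)
  have hE : IntervalIntegrable (fun x => (χ/x) * hf x) volume χ 1 := by
    apply hh.continuousOn_mul
    apply ContinuousOn.div continuousOn_const continuousOn_id
    intro x hx
    rw [uIcc_of_le h1.le] at hx
    simp only [id]
    exact ne_of_gt (lt_of_lt_of_le h0 hx.1)
  have e1 : Real.sqrt χ * Aint χ = (∫ x in χ..1, hf x) - ∫ x in χ..1, (χ/x) * hf x := by
    rw [subst h0 h1, ← intervalIntegral.integral_sub hh hE]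
    apply intervalIntegral.integral_congr
    intro x _
    simp only [hf]
    ring
  have e2 : (∫ x in (0:ℝ)..χ, hf x) + (∫ x in χ..1, hf x) = ∫ x in (0:ℝ)..1, hf x :=
    intervalIntegral.integral_add_adjacent_intervals (hf_int.mono_set (sub_uIcc' h0.le h1.le)) hh
  rw [e1]
  linarith

lemma T0 : Tendsto (fun χ : ℝ => ∫ x in (0:ℝ)..χ, hf x) (nhdsWithin 0 (Set.Ioi 0)) (nhds 0) := by
  have hub : Tendsto (fun χ : ℝ => (2:ℝ) ^ ((3:ℝ)/4) * (χ ^ ((1:ℝ)/2) / (1/2)))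
      (nhdsWithin 0 (Set.Ioi 0)) (nhds 0) := by
    have hc : ContinuousAt (fun χ : ℝ => (2:ℝ) ^ ((3:ℝ)/4) * (χ ^ ((1:ℝ)/2) / (1/2))) 0 := by
      apply ContinuousAt.mul continuousAt_const
      apply ContinuousAt.div_const
      exact Real.continuousAt_rpow_const 0 _ (Or.inr (by norm_num))
    have := hc.tendsto
    rw [show ((0:ℝ) ^ ((1:ℝ)/2)) = 0 from Real.zero_rpow (by norm_num)] at this
    norm_num at this
    exact this.mono_left nhdsWithin_le_nhds
  apply tendsto_of_tendsto_of_tendsto_of_le_of_le' tendsto_const_nhds hub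
  · filter_upwards [Ioo_mem_nhdsGT_of_mem (show (0:ℝ) ∈ Ico (0:ℝ) (1/2) by norm_num)]
      with χ hχ
    apply intervalIntegral.integral_nonneg hχ.1.le
    intro x hx
    apply mul_nonneg (Real.rpow_nonneg hx.1 _) (Real.rpow_nonneg (by linarith [hx.2, hχ.2]) _)
  · filter_upwards [Ioo_mem_nhdsGT_of_mem (show (0:ℝ) ∈ Ico (0:ℝ) (1/2) by norm_num)]
      with χ hχ
    have hint : ∫ x in (0:ℝ)..χ, x ^ (-(1/2):ℝ) = χ ^ ((1:ℝ)/2) / (1/2) := by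
      rw [integral_rpow (Or.inl (by norm_num))]
      rw [show (-(1/2) + 1 : ℝ) = 1/2 by norm_num, Real.zero_rpow (by norm_num)]
      ring
    calc (∫ x in (0:ℝ)..χ, hf x)
        ≤ ∫ x in (0:ℝ)..χ, (2:ℝ) ^ ((3:ℝ)/4) * x ^ (-(1/2):ℝ) := by
          apply intervalIntegral.integral_mono_on hχ.1.le
            (hf_int.mono_set (sub_uIcc' hχ.1.le (by linarith [hχ.2])))
            ((intervalIntegrable_rpow' (by norm_num)).const_mul _)
          intro x hx
          simp only [hf]
          rw [mul_comm ((2:ℝ) ^ ((3:ℝ)/4))]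
          apply mul_le_mul_of_nonneg_left _ (Real.rpow_nonneg hx.1 _)
          calc (1 - x) ^ (-(3/4):ℝ) ≤ (2⁻¹ : ℝ) ^ (-(3/4):ℝ) := by
                apply Real.rpow_le_rpow_of_nonpos (by norm_num) (by linarith [hx.2, hχ.2])
                  (by norm_num)
            _ = (2:ℝ) ^ ((3:ℝ)/4) := by
                rw [Real.inv_rpow (by norm_num), ← Real.rpow_neg (by norm_num)]
                norm_num
      _ = (2:ℝ) ^ ((3:ℝ)/4) * (χ ^ ((1:ℝ)/2) / (1/2)) := by
          rw [intervalIntegral.integral_const_mul, hint]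

lemma TE : Tendsto (fun χ : ℝ => ∫ x in χ..1, (χ/x) * hf x)
    (nhdsWithin 0 (Set.Ioi 0)) (nhds 0) := by
  set C : ℝ := ∫ x in (0:ℝ)..1, cf x with hC
  have hub : Tendsto (fun χ : ℝ => χ ^ ((1:ℝ)/4) * C) (nhdsWithin 0 (Set.Ioi 0)) (nhds 0) := by
    have hc : ContinuousAt (fun χ : ℝ => χ ^ ((1:ℝ)/4) * C) 0 :=
      ContinuousAt.mul (Real.continuousAt_rpow_const 0 _ (Or.inr (by norm_num))) continuousAt_const
    have := hc.tendsto
    rw [show ((0:ℝ) ^ ((1:ℝ)/4) * C) = 0 by rw [Real.zero_rpow (by norm_num)]; ring] at this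
    exact this.mono_left nhdsWithin_le_nhds
  apply tendsto_of_tendsto_of_tendsto_of_le_of_le' tendsto_const_nhds hub
  · filter_upwards [Ioo_mem_nhdsGT_of_mem (show (0:ℝ) ∈ Ico (0:ℝ) 1 by norm_num)] with χ hχ
    apply intervalIntegral.integral_nonneg hχ.2.le
    intro x hx
    have hx0 : 0 < x := lt_of_lt_of_le hχ.1 hx.1
    apply mul_nonneg (div_nonneg hχ.1.le hx0.le)
    exact mul_nonneg (Real.rpow_nonneg hx0.le _) (Real.rpow_nonneg (by linarith [hx.2]) _)
  · filter_upwards [Ioo_mem_nhdsGT_of_mem (show (0:ℝ) ∈ Ico (0:ℝ) 1 by norm_num)] with χ hχ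
    have hh : IntervalIntegrable hf volume χ 1 := hf_int.mono_set (sub_uIcc hχ.1.le hχ.2.le)
    have hE : IntervalIntegrable (fun x => (χ/x) * hf x) volume χ 1 := by
      apply hh.continuousOn_mul
      apply ContinuousOn.div continuousOn_const continuousOn_id
      intro x hx
      rw [uIcc_of_le hχ.2.le] at hx
      simp only [id]
      exact ne_of_gt (lt_of_lt_of_le hχ.1 hx.1)
    calc (∫ x in χ..1, (χ/x) * hf x)
        ≤ ∫ x in χ..1, χ ^ ((1:ℝ)/4) * cf x := by
          apply intervalIntegral.integral_mono_on hχ.2.le hE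
            (((cf_int.mono_set (sub_uIcc hχ.1.le hχ.2.le))).const_mul _)
          intro x hx
          have hx0 : 0 < x := lt_of_lt_of_le hχ.1 hx.1
          simp only [hf, cf]
          rw [← mul_assoc, ← mul_assoc]
          apply mul_le_mul_of_nonneg_right _ (Real.rpow_nonneg (by linarith [hx.2]) _)
          have ht1 : χ / x ≤ (χ/x) ^ ((1:ℝ)/4) := by
            nth_rewrite 1 [← Real.rpow_one (χ/x)]
            apply Real.rpow_le_rpow_of_exponent_ge (div_pos hχ.1 hx0)
              ((div_le_one hx0).mpr hx.1) (by norm_num)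
          have ht2 : (χ/x) ^ ((1:ℝ)/4) * x ^ (-(1/2):ℝ) = χ ^ ((1:ℝ)/4) * x ^ (-(3/4):ℝ) := by
            rw [Real.div_rpow hχ.1.le hx0.le, div_mul_eq_mul_div, mul_div_assoc,
              ← Real.rpow_sub hx0]
            norm_num
          rw [← ht2]
          exact mul_le_mul_of_nonneg_right ht1 (Real.rpow_nonneg hx0.le _)
      _ = χ ^ ((1:ℝ)/4) * ∫ x in χ..1, cf x := intervalIntegral.integral_const_mul _ _
      _ ≤ χ ^ ((1:ℝ)/4) * C := by
          apply mul_le_mul_of_nonneg_left _ (Real.rpow_nonneg hχ.1.le _)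
          apply intervalIntegral.integral_mono_interval hχ.1.le hχ.2.le le_rfl _ cf_int
          filter_upwards [ae_restrict_mem measurableSet_Ioc] with x hx
          exact mul_nonneg (Real.rpow_nonneg hx.1.le _) (Real.rpow_nonneg (by linarith [hx.2]) _)

/-- lim_{χ→0+} √χ · A(χ) = √π · Γ(1/4)/Γ(3/4). -/
theorem stmt11 :
    Filter.Tendsto (fun χ : ℝ => Real.sqrt χ * Aint χ) (nhdsWithin 0 (Set.Ioi 0))
      (nhds (Real.sqrt Real.pi * Real.Gamma (1/4) / Real.Gamma (3/4))) := by
  rw [← betaVal2]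
  apply Filter.Tendsto.congr'
    (f₁ := fun χ : ℝ => (∫ x in (0:ℝ)..1, hf x) - (∫ x in (0:ℝ)..χ, hf x)
      - ∫ x in χ..1, (χ/x) * hf x)
  · filter_upwards [Ioo_mem_nhdsGT_of_mem (show (0:ℝ) ∈ Ico (0:ℝ) 1 by norm_num)] with χ hχ
    exact (decomp hχ.1 hχ.2).symm
  · have h1 : Tendsto (fun χ : ℝ => (∫ x in (0:ℝ)..1, hf x) - (∫ x in (0:ℝ)..χ, hf x)
        - ∫ x in χ..1, (χ/x) * hf x) (nhdsWithin 0 (Set.Ioi 0))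
        (nhds ((∫ x in (0:ℝ)..1, hf x) - 0 - 0)) := (tendsto_const_nhds.sub T0).sub TE
    simpa using h1
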